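/- Let a : ℝ → ℝ be continuous with a(x) > 0 for all x, and let H : ℝ × ℝ → ℝ be continuous, coercive in p uniformly in x (i.e., α(|p|) ≤ H(p,x) ≤ β(|p|) for coercive functions α, β : [0,∞) → ℝ), and locally Lipschitz in p uniformly in x. Suppose m, M : ℝ → ℝ are bounded C¹ functions with m(x) < M(x) for all x, satisfying the strict inequalities a(x)·m'(x) + H(m(x), x) < 0 < a(x)·M'(x) + H(M(x), x) for all x ∈ ℝ. Then there exists f ∈ C¹(ℝ) with a(x)·f'(x) + H(f(x), x) = 0 and m(x) < f(x) < M(x) for all x ∈ ℝ. -/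

import Mathlib

open Set Filter MeasureTheory Topology

/-- One-sided invariance: a solution starting below `M` stays below `M`. -/
private lemma stmt1_inv_below (F : ℝ → ℝ → ℝ) (M M' : ℝ → ℝ)
    (hM : ∀ x, HasDerivAt M (M' x) x)
    (hFM : ∀ x, F x (M x) < M' x)
    {c d : ℝ} {g : ℝ → ℝ}
    (hg : ∀ t ∈ Icc c d, HasDerivWithinAt g (F t (g t)) (Icc c d) t)
    (h0 : g c ≤ M c) : ∀ t ∈ Icc c d, g t ≤ M t := by
  by_contra hcon
  push_neg at hcon
  obtain ⟨u, hu, hgu⟩ := hcon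
  set h : ℝ → ℝ := fun t => g t - M t with hh
  have hcd : c ≤ d := le_trans hu.1 hu.2
  have hd : ∀ t ∈ Icc c d, HasDerivWithinAt h (F t (g t) - M' t) (Icc c d) t :=
    fun t ht => ((hg t ht).sub (hM t).hasDerivWithinAt)
  have hcont : ContinuousOn h (Icc c d) := fun t ht => (hd t ht).continuousWithinAt
  have hcu : c ≤ u := hu.1
  have hIccsub : Icc c u ⊆ Icc c d := Icc_subset_Icc le_rfl hu.2
  set S : Set ℝ := {t | t ∈ Icc c u ∧ h t ≤ 0} with hSdef
  have hSne : S.Nonempty := ⟨c, ⟨le_rfl, hcu⟩, by simpa [hh] using sub_nonpos.2 h0⟩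
  have hSbdd : BddAbove S := ⟨u, fun t ht => ht.1.2⟩
  have hSclosed : IsClosed S := by
    have : S = Icc c u ∩ h ⁻¹' Iic 0 := by ext t; simp [hSdef, mem_preimage]
    rw [this]
    exact (hcont.mono hIccsub).preimage_isClosed_of_isClosed isClosed_Icc isClosed_Iic
  set t₁ : ℝ := sSup S with ht₁def
  have ht₁S : t₁ ∈ S := hSclosed.csSup_mem hSne hSbdd
  have ht₁u : t₁ < u := by
    rcases lt_or_eq_of_le ht₁S.1.2 with h' | h'
    · exact h'
    · exact absurd (h' ▸ ht₁S.2) (by simpa [hh] using not_le.2 (sub_pos.2 hgu))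
  have hpos : ∀ t ∈ Ioc t₁ u, 0 < h t := by
    intro t ht
    by_contra hle
    exact absurd (le_csSup hSbdd (⟨⟨le_trans ht₁S.1.1 ht.1.le, ht.2⟩, not_lt.1 hle⟩ : t ∈ S))
      (not_le.2 ht.1)
  have hIocsub : Ioc t₁ u ⊆ Icc c d :=
    fun t ht => ⟨le_trans ht₁S.1.1 ht.1.le, le_trans ht.2 hu.2⟩
  have ht₁mem : t₁ ∈ Icc c d := hIccsub ht₁S.1
  -- h t₁ = 0
  have hzero : h t₁ = 0 := by
    refine le_antisymm ht₁S.2 ?_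
    have hcw : Tendsto h (𝓝[Ioc t₁ u] t₁) (𝓝 (h t₁)) :=
      ((hcont t₁ ht₁mem).mono hIocsub).tendsto
    have hne : (𝓝[Ioc t₁ u] t₁).NeBot := by
      rw [nhdsWithin_Ioc_eq_nhdsGT ht₁u]; infer_instance
    exact ge_of_tendsto hcw (eventually_mem_nhdsWithin.mono fun t ht => (hpos t ht).le)
  have hMeq : g t₁ = M t₁ := by have := hzero; simp [hh, sub_eq_zero] at this; exact this
  -- slope from the right is nonneg, but derivative is negative
  have hderiv : HasDerivWithinAt h (F t₁ (g t₁) - M' t₁) (Icc c d) t₁ := hd t₁ ht₁mem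
  have hneg : F t₁ (g t₁) - M' t₁ < 0 := by
    rw [hMeq]; exact sub_neg.2 (hFM t₁)
  have hslope : Tendsto (slope h t₁) (𝓝[Ioc t₁ u] t₁) (𝓝 (F t₁ (g t₁) - M' t₁)) := by
    have := hasDerivWithinAt_iff_tendsto_slope.1 hderiv
    exact this.mono_left (nhdsWithin_mono _ (fun t ht => ⟨hIocsub ht, ne_of_gt ht.1⟩))
  have hne : (𝓝[Ioc t₁ u] t₁).NeBot := by
    rw [nhdsWithin_Ioc_eq_nhdsGT ht₁u]; infer_instance
  have : 0 ≤ F t₁ (g t₁) - M' t₁ := by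
    refine ge_of_tendsto hslope (eventually_mem_nhdsWithin.mono fun t ht => ?_)
    rw [slope_def_field, hzero, sub_zero]
    exact div_nonneg (hpos t ht).le (by linarith [ht.1])
  linarith

/-- Comparison: two solutions of the same (locally Lipschitz) ODE stay ordered. -/
private lemma stmt1_comp (F : ℝ → ℝ → ℝ) {L : NNReal} {s : Set ℝ}
    {c d : ℝ} {g₁ g₂ : ℝ → ℝ}
    (hlip : ∀ t ∈ Icc c d, LipschitzOnWith L (F t) s)
    (hg₁ : ∀ t ∈ Icc c d, HasDerivWithinAt g₁ (F t (g₁ t)) (Icc c d) t)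
    (hg₂ : ∀ t ∈ Icc c d, HasDerivWithinAt g₂ (F t (g₂ t)) (Icc c d) t)
    (hs₁ : ∀ t ∈ Icc c d, g₁ t ∈ s) (hs₂ : ∀ t ∈ Icc c d, g₂ t ∈ s)
    (h0 : g₁ c ≤ g₂ c) : ∀ t ∈ Icc c d, g₁ t ≤ g₂ t := by
  by_contra hcon
  push_neg at hcon
  obtain ⟨u, hu, hgu⟩ := hcon
  set h : ℝ → ℝ := fun t => g₁ t - g₂ t with hh
  have hcont : ContinuousOn h (Icc c d) := fun t ht =>
    ((hg₁ t ht).sub (hg₂ t ht)).continuousWithinAt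
  have hcu : c ≤ u := hu.1
  have hIccsub : Icc c u ⊆ Icc c d := Icc_subset_Icc le_rfl hu.2
  set S : Set ℝ := {t | t ∈ Icc c u ∧ h t ≤ 0} with hSdef
  have hSne : S.Nonempty := ⟨c, ⟨le_rfl, hcu⟩, by simpa [hh] using sub_nonpos.2 h0⟩
  have hSbdd : BddAbove S := ⟨u, fun t ht => ht.1.2⟩
  have hSclosed : IsClosed S := by
    have : S = Icc c u ∩ h ⁻¹' Iic 0 := by ext t; simp [hSdef, mem_preimage]
    rw [this]
    exact (hcont.mono hIccsub).preimage_isClosed_of_isClosed isClosed_Icc isClosed_Iic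
  set t₁ : ℝ := sSup S with ht₁def
  have ht₁S : t₁ ∈ S := hSclosed.csSup_mem hSne hSbdd
  have ht₁u : t₁ < u := by
    rcases lt_or_eq_of_le ht₁S.1.2 with h' | h'
    · exact h'
    · exact absurd (h' ▸ ht₁S.2) (by simpa [hh] using not_le.2 (sub_pos.2 hgu))
  have hpos : ∀ t ∈ Ioc t₁ u, 0 < h t := by
    intro t ht
    by_contra hle
    exact absurd (le_csSup hSbdd (⟨⟨le_trans ht₁S.1.1 ht.1.le, ht.2⟩, not_lt.1 hle⟩ : t ∈ S))
      (not_le.2 ht.1)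
  have hIocsub : Ioc t₁ u ⊆ Icc c d :=
    fun t ht => ⟨le_trans ht₁S.1.1 ht.1.le, le_trans ht.2 hu.2⟩
  have ht₁mem : t₁ ∈ Icc c d := hIccsub ht₁S.1
  have hzero : h t₁ = 0 := by
    refine le_antisymm ht₁S.2 ?_
    have hcw : Tendsto h (𝓝[Ioc t₁ u] t₁) (𝓝 (h t₁)) :=
      ((hcont t₁ ht₁mem).mono hIocsub).tendsto
    have hne : (𝓝[Ioc t₁ u] t₁).NeBot := by
      rw [nhdsWithin_Ioc_eq_nhdsGT ht₁u]; infer_instance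
    exact ge_of_tendsto hcw (eventually_mem_nhdsWithin.mono fun t ht => (hpos t ht).le)
  have heq1 : g₁ t₁ = g₂ t₁ := by
    have := hzero; simp only [hh, sub_eq_zero] at this; exact this
  -- uniqueness on [t₁, u]
  set s' : ℝ → Set ℝ := fun t => if t ∈ Icc c d then s else (∅ : Set ℝ) with hs'
  have hv : ∀ t, LipschitzOnWith L (F t) (s' t) := by
    intro t
    by_cases ht : t ∈ Icc c d
    · simpa only [hs', if_pos ht] using hlip t ht
    · simpa only [hs', if_neg ht] using lipschitzOnWith_empty L (F t)
  have hIcosub : Ico t₁ u ⊆ Icc c d := fun t ht => ⟨le_trans ht₁mem.1 ht.1, le_trans ht.2.le hu.2⟩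
  have hIccsub' : Icc t₁ u ⊆ Icc c d := Icc_subset_Icc ht₁mem.1 hu.2
  have hderconv : ∀ (g : ℝ → ℝ), (∀ t ∈ Icc c d, HasDerivWithinAt g (F t (g t)) (Icc c d) t) →
      ∀ t ∈ Ico t₁ u, HasDerivWithinAt g (F t (g t)) (Ici t) t := by
    intro g hg t ht
    refine (hg t (hIcosub ht)).mono_of_mem_nhdsWithin ?_
    exact mem_of_superset (Icc_mem_nhdsGE_of_mem ⟨le_refl t, lt_of_lt_of_le ht.2 hu.2⟩)
      (Icc_subset_Icc (hIcosub ht).1 le_rfl)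
  have hmem : ∀ (g : ℝ → ℝ), (∀ t ∈ Icc c d, g t ∈ s) → ∀ t ∈ Ico t₁ u, g t ∈ s' t := by
    intro g hgs t ht
    have := hgs t (hIcosub ht)
    simpa only [hs', if_pos (hIcosub ht)] using this
  have hc1 : ContinuousOn g₁ (Icc t₁ u) :=
    fun t ht => ((hg₁ t (hIccsub' ht)).continuousWithinAt).mono hIccsub'
  have hc2 : ContinuousOn g₂ (Icc t₁ u) :=
    fun t ht => ((hg₂ t (hIccsub' ht)).continuousWithinAt).mono hIccsub'
  have heqon := ODE_solution_unique_of_mem_Icc_right (fun t _ => hv t)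
    hc1 (hderconv g₁ hg₁) (hmem g₁ hs₁) hc2 (hderconv g₂ hg₂) (hmem g₂ hs₂) heq1
  have : g₁ u = g₂ u := heqon ⟨ht₁u.le, le_rfl⟩
  exact absurd this (ne_of_gt hgu)

private lemma stmt1_inv (F : ℝ → ℝ → ℝ) (m M m' M' : ℝ → ℝ)
    (hm : ∀ x, HasDerivAt m (m' x) x) (hM : ∀ x, HasDerivAt M (M' x) x)
    (hFm : ∀ x, m' x < F x (m x)) (hFM : ∀ x, F x (M x) < M' x)
    {c d : ℝ} {g : ℝ → ℝ}
    (hg : ∀ t ∈ Icc c d, HasDerivWithinAt g (F t (g t)) (Icc c d) t)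
    (h0m : m c ≤ g c) (h0M : g c ≤ M c) : ∀ t ∈ Icc c d, m t ≤ g t ∧ g t ≤ M t := by
  have hup := stmt1_inv_below F M M' hM hFM hg h0M
  have hlow := stmt1_inv_below (fun t p => -F t (-p)) (fun t => -(m t)) (fun t => -(m' t))
      (fun x => (hm x).neg) (fun x => by simpa using hFm x) (g := fun t => -(g t))
      (c := c) (d := d) (fun t ht => by
        show HasDerivWithinAt (fun t => -g t) (-F t (-(-g t))) (Icc c d) t
        rw [neg_neg]; exact (hg t ht).neg) (by simpa using h0m)
  exact fun t ht => ⟨by simpa using hlow t ht, hup t ht⟩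

private lemma stmt1_exists_sol (F : ℝ → ℝ → ℝ)
    (hFc : Continuous fun q : ℝ × ℝ => F q.1 q.2)
    (m M m' M' : ℝ → ℝ)
    (hm : ∀ x, HasDerivAt m (m' x) x) (hM : ∀ x, HasDerivAt M (M' x) x)
    (hFm : ∀ x, m' x < F x (m x)) (hFM : ∀ x, F x (M x) < M' x)
    (hmM : ∀ x, m x ≤ M x)
    (K : ℝ) (hmK : ∀ x, |m x| ≤ K) (hMK : ∀ x, |M x| ≤ K)
    (hlip : ∀ c d : ℝ, ∃ L : NNReal, ∀ t ∈ Icc c d,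
      LipschitzOnWith L (F t) (Icc (-(K + 1)) (K + 1)))
    (c d : ℝ) (hcd : c ≤ d) :
    ∃ g : ℝ → ℝ, g c = M c ∧ (∀ t ∈ Icc c d, HasDerivWithinAt g (F t (g t)) (Icc c d) t) ∧
      ∀ t ∈ Icc c d, m t ≤ g t ∧ g t ≤ M t := by
  obtain ⟨L, hL⟩ := hlip c d
  have hcpt : IsCompact ((Icc c d) ×ˢ (Icc (-(K + 1)) (K + 1)) : Set (ℝ × ℝ)) :=
    isCompact_Icc.prod isCompact_Icc
  obtain ⟨C₀, hC₀⟩ := hcpt.exists_bound_of_continuousOn hFc.continuousOn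
  set Cb : ℝ := max C₀ 0 with hCbdef
  have hCb : ∀ t ∈ Icc c d, ∀ p ∈ Icc (-(K + 1)) (K + 1), |F t p| ≤ Cb := by
    intro t ht p hp
    have := hC₀ (t, p) ⟨ht, hp⟩
    rw [Real.norm_eq_abs] at this
    exact this.trans (le_max_left _ _)
  have hCb0 : (0 : ℝ) ≤ Cb := le_max_right _ _
  set ε : ℝ := 1 / (Cb + 1) with hεdef
  have hε : 0 < ε := by positivity
  have hKnn : (0 : ℝ) ≤ K := le_trans (abs_nonneg _) (hMK 0)
  -- main induction
  have key : ∀ k : ℕ, ∃ g : ℝ → ℝ, g c = M c ∧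
      (∀ t ∈ Icc c (min (c + k * ε) d), HasDerivWithinAt g (F t (g t))
        (Icc c (min (c + k * ε) d)) t) ∧
      ∀ t ∈ Icc c (min (c + k * ε) d), m t ≤ g t ∧ g t ≤ M t := by
    intro k
    induction k with
    | zero =>
      refine ⟨fun _ => M c, rfl, ?_, ?_⟩ <;>
        simp only [Nat.cast_zero, zero_mul, add_zero, min_eq_left hcd, Icc_self]
      · intro t ht
        simp only [mem_singleton_iff] at ht
        rw [ht, hasDerivWithinAt_iff_tendsto_slope]
        simp
      · intro t ht
        simp only [mem_singleton_iff] at ht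
        rw [ht]
        exact ⟨hmM c, le_rfl⟩
    | succ k ih =>
      obtain ⟨g, hgc, hgd, hgb⟩ := ih
      set e : ℝ := min (c + k * ε) d with hedef
      set e' : ℝ := min (c + (k + 1 : ℕ) * ε) d with he'def
      have hke : (0:ℝ) ≤ k * ε := by positivity
      have hce : c ≤ e := le_min (by linarith) hcd
      have hee' : e ≤ e' := by
        refine min_le_min ?_ le_rfl
        push_cast
        nlinarith [hε.le]
      have he'd : e' ≤ d := min_le_right _ _
      by_cases hdone : d ≤ c + k * ε
      · have h1 : e = d := min_eq_right hdone
        have h2 : e' = d := min_eq_right (by push_cast; nlinarith [hε.le])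
        exact ⟨g, hgc, by rw [h2, ← h1]; exact hgd, by rw [h2, ← h1]; exact hgb⟩
      · push_neg at hdone
        have he : e = c + k * ε := min_eq_left hdone.le
        have he'le : e' ≤ e + ε := by
          rw [he]
          refine le_trans (min_le_left _ _) ?_
          push_cast
          linarith
        have heIcc : Icc e e' ⊆ Icc c d := Icc_subset_Icc hce he'd
        set y : ℝ := g e with hydef
        have hyb := hgb e ⟨hce, le_rfl⟩
        have hyK : |y| ≤ K := by
          rw [abs_le]
          constructor
          · linarith [hyb.1, (abs_le.1 (hmK e)).1]
          · linarith [hyb.2, (abs_le.1 (hMK e)).2]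
        have hball : Metric.closedBall y 1 ⊆ Icc (-(K + 1)) (K + 1) := by
          rw [Real.closedBall_eq_Icc]
          have := abs_le.1 hyK
          exact Icc_subset_Icc (by linarith [this.1]) (by linarith [this.2])
        have hpl : IsPicardLindelof F (tmin := e) (tmax := e') ⟨e, le_rfl, hee'⟩ y 1 0 ⟨Cb, hCb0⟩ L :=
          { lipschitzOnWith := fun t ht => (hL t (heIcc ht)).mono hball
            continuousOn := fun p _ =>
              (hFc.comp (continuous_id.prodMk continuous_const)).continuousOn
            norm_le := fun t ht p hp => by
              rw [Real.norm_eq_abs]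
              exact hCb t (heIcc ht) p (hball hp)
            mul_max_le := by
              show Cb * max (e' - e) (e - e) ≤ 1 - 0
              rw [sub_zero]
              have h1 : max (e' - e) (e - e) = e' - e := max_eq_left (by linarith)
              rw [h1]
              calc Cb * (e' - e) ≤ Cb * ε :=
                    mul_le_mul_of_nonneg_left (by linarith) hCb0
                _ = Cb / (Cb + 1) := by rw [hεdef]; ring
                _ ≤ 1 := by rw [div_le_one (by linarith)]; linarith }
        obtain ⟨h, hhe, hhd⟩ := hpl.exists_eq_forall_mem_Icc_hasDerivWithinAt₀
        replace hhe : h e = y := hhe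
        have hinv : ∀ t ∈ Icc e e', m t ≤ h t ∧ h t ≤ M t :=
          stmt1_inv F m M m' M' hm hM hFm hFM hhd
            (by rw [hhe]; exact hyb.1) (by rw [hhe]; exact hyb.2)
        set G : ℝ → ℝ := fun t => if t ≤ e then g t else h t with hGdef
        have hGg : ∀ s, s ≤ e → G s = g s := fun s hs => if_pos hs
        have hGh : ∀ s ∈ Icc e e', G s = h s := by
          intro s hs
          by_cases hse : s ≤ e
          · have hse' : s = e := le_antisymm hse hs.1
            rw [hse', hGg e le_rfl, hhe]
          · exact if_neg hse
        refine ⟨G, by rw [hGg c hce]; exact hgc, ?_, ?_⟩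
        · intro t ht
          rcases lt_trichotomy t e with hlt | heq | hgt
          · have htm : t ∈ Icc c e := ⟨ht.1, hlt.le⟩
            have hmem : Icc c e ∩ Iio e ∈ 𝓝[Icc c e'] t :=
              mem_of_superset (inter_mem_nhdsWithin _ (Iio_mem_nhds hlt))
                (fun s hs => ⟨⟨hs.1.1, hs.2.le⟩, hs.2⟩)
            have h1 : HasDerivWithinAt G (F t (g t)) (Icc c e ∩ Iio e) t :=
              ((hgd t htm).mono inter_subset_left).congr
                (fun s hs => hGg s hs.2.le) (hGg t hlt.le)
            rw [show G t = g t from hGg t hlt.le]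
            exact h1.mono_of_mem_nhdsWithin hmem
          · subst heq
            have hA : HasDerivWithinAt G (F e (G e)) (Icc c e) e := by
              rw [show G e = g e from hGg e le_rfl]
              exact (hgd e ⟨hce, le_rfl⟩).congr (fun s hs => hGg s hs.2) (hGg e le_rfl)
            have hB : HasDerivWithinAt G (F e (G e)) (Icc e e') e := by
              rw [show G e = h e from hGh e ⟨le_rfl, hee'⟩]
              exact (hhd e ⟨le_rfl, hee'⟩).congr (fun s hs => hGh s hs) (hGh e ⟨le_rfl, hee'⟩)
            have hun := hA.union hB
            rwa [Icc_union_Icc_eq_Icc hce hee'] at hun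
          · have htm : t ∈ Icc e e' := ⟨hgt.le, ht.2⟩
            have hmem : Icc e e' ∩ Ioi e ∈ 𝓝[Icc c e'] t :=
              mem_of_superset (inter_mem_nhdsWithin _ (Ioi_mem_nhds hgt))
                (by intro s hs; exact ⟨⟨hs.2.le, hs.1.2⟩, hs.2⟩)
            have h1 : HasDerivWithinAt G (F t (h t)) (Icc e e' ∩ Ioi e) t :=
              ((hhd t htm).mono inter_subset_left).congr
                (fun s hs => hGh s hs.1) (hGh t htm)
            rw [show G t = h t from hGh t htm]
            exact h1.mono_of_mem_nhdsWithin hmem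
        · intro t ht
          by_cases hte : t ≤ e
          · rw [hGg t hte]; exact hgb t ⟨ht.1, hte⟩
          · rw [hGh t ⟨(not_le.1 hte).le, ht.2⟩]
            exact hinv t ⟨(not_le.1 hte).le, ht.2⟩
  obtain ⟨k, hk⟩ := exists_nat_ge ((d - c) / ε)
  have hdk : d ≤ c + k * ε := by
    rw [div_le_iff₀ hε] at hk
    linarith
  obtain ⟨g, h1, h2, h3⟩ := key k
  rw [min_eq_right hdk] at h2 h3
  exact ⟨g, h1, h2, h3⟩

/-- Lemma A.7, first alternative: a C¹ solution can be inserted between a strict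
subsolution `m` and a strict supersolution `M` of the first-order ODE. -/
theorem stmt1
    (a : ℝ → ℝ) (ha_cont : Continuous a) (ha_pos : ∀ x, 0 < a x)
    (H : ℝ → ℝ → ℝ) (hH_cont : Continuous (fun q : ℝ × ℝ => H q.1 q.2))
    (hH_coer : ∃ α β : ℝ → ℝ, Tendsto α atTop atTop ∧ Tendsto β atTop atTop ∧
      ∀ p x : ℝ, α |p| ≤ H p x ∧ H p x ≤ β |p|)
    (hH_lip : ∀ R > (0 : ℝ), ∃ C : ℝ, ∀ p ∈ Icc (-R) R, ∀ q ∈ Icc (-R) R, ∀ x : ℝ,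
      |H p x - H q x| ≤ C * |p - q|)
    (m M m' M' : ℝ → ℝ)
    (hm : ∀ x, HasDerivAt m (m' x) x) (hM : ∀ x, HasDerivAt M (M' x) x)
    (hm'c : Continuous m') (hM'c : Continuous M')
    (hmb : ∃ B, ∀ x, |m x| ≤ B) (hMb : ∃ B, ∀ x, |M x| ≤ B)
    (hmM : ∀ x, m x < M x)
    (hsub : ∀ x, a x * m' x + H (m x) x < 0)
    (hsup : ∀ x, 0 < a x * M' x + H (M x) x) :
    ∃ f f' : ℝ → ℝ, (∀ x, HasDerivAt f (f' x) x) ∧ Continuous f' ∧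
      (∀ x, a x * f' x + H (f x) x = 0) ∧ ∀ x, m x < f x ∧ f x < M x := by
  obtain ⟨Bm, hBm⟩ := hmb
  obtain ⟨BM, hBM⟩ := hMb
  set K : ℝ := max Bm BM with hK
  have hmK : ∀ x, |m x| ≤ K := fun x => (hBm x).trans (le_max_left _ _)
  have hMK : ∀ x, |M x| ≤ K := fun x => (hBM x).trans (le_max_right _ _)
  have hKnn : (0:ℝ) ≤ K := le_trans (abs_nonneg _) (hmK 0)
  have hane : ∀ t, a t ≠ 0 := fun t => (ha_pos t).ne'
  set F : ℝ → ℝ → ℝ := fun t p => -(H p t) / a t with hF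
  have hFc : Continuous fun q : ℝ × ℝ => F q.1 q.2 := by
    apply Continuous.div
    · exact (hH_cont.comp (continuous_snd.prodMk continuous_fst)).neg
    · exact ha_cont.comp continuous_fst
    · exact fun q => hane q.1
  have hFc2 : ∀ t, Continuous (F t) :=
    fun t => hFc.comp (continuous_const.prodMk continuous_id)
  have hFm : ∀ x, m' x < F x (m x) := by
    intro x
    rw [hF, lt_div_iff₀ (ha_pos x)]
    nlinarith [hsub x]
  have hFM : ∀ x, F x (M x) < M' x := by
    intro x
    rw [hF, div_lt_iff₀ (ha_pos x)]
    nlinarith [hsup x]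
  have hmlM : ∀ x, m x ≤ M x := fun x => (hmM x).le
  have hlip : ∀ c d : ℝ, ∃ L : NNReal, ∀ t ∈ Icc c d,
      LipschitzOnWith L (F t) (Icc (-(K + 1)) (K + 1)) := by
    intro c d
    rcases le_or_gt c d with hcd | hcd
    · obtain ⟨t₀, ht₀, hmin⟩ := isCompact_Icc.exists_isMinOn ⟨c, le_rfl, hcd⟩
        ha_cont.continuousOn
      have hamin : 0 < a t₀ := ha_pos t₀
      obtain ⟨C, hC⟩ := hH_lip (K + 1) (by positivity)
      refine ⟨Real.toNNReal (max C 0 / a t₀), fun t ht => ?_⟩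
      rw [lipschitzOnWith_iff_dist_le_mul]
      intro p hp q hq
      rw [Real.dist_eq, Real.dist_eq,
        Real.coe_toNNReal _ (by positivity : (0:ℝ) ≤ max C 0 / a t₀)]
      have hat : 0 < a t := ha_pos t
      have h1 : |F t p - F t q| = |H p t - H q t| / a t := by
        rw [hF]
        rw [div_sub_div_same, abs_div, abs_of_pos hat]
        congr 1
        rw [← abs_neg]
        congr 1
        ring
      have h2 : |H p t - H q t| ≤ max C 0 * |p - q| := by
        refine le_trans (hC p hp q hq t) ?_
        exact mul_le_mul_of_nonneg_right (le_max_left _ _) (abs_nonneg _)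
      rw [h1, div_mul_eq_mul_div]
      exact div_le_div₀ (by positivity) h2 hamin (hmin ht)
    · exact ⟨1, fun t ht => absurd (ht.1.trans ht.2) (not_le.2 hcd)⟩
  -- existence of approximating solutions
  have hex : ∀ n : ℕ, ∃ g : ℝ → ℝ, g (-((n:ℝ) + 1)) = M (-((n:ℝ) + 1)) ∧
      (∀ t ∈ Icc (-((n:ℝ) + 1)) ((n:ℝ) + 1), HasDerivWithinAt g (F t (g t))
        (Icc (-((n:ℝ) + 1)) ((n:ℝ) + 1)) t) ∧
      ∀ t ∈ Icc (-((n:ℝ) + 1)) ((n:ℝ) + 1), m t ≤ g t ∧ g t ≤ M t := by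
    intro n
    exact stmt1_exists_sol F hFc m M m' M' hm hM hFm hFM hmlM K hmK hMK hlip
      (-((n:ℝ) + 1)) ((n:ℝ) + 1) (by have h0 : (0:ℝ) ≤ (n:ℝ) := n.cast_nonneg; linarith)
  choose fs hfs1 hfs2 hfs3 using hex
  -- one-step comparison
  have hstep : ∀ n : ℕ, ∀ t ∈ Icc (-((n:ℝ) + 1)) ((n:ℝ) + 1), fs (n + 1) t ≤ fs n t := by
    intro n
    obtain ⟨L, hL⟩ := hlip (-((n:ℝ) + 1)) ((n:ℝ) + 1)
    have hsubn : Icc (-((n:ℝ) + 1)) ((n:ℝ) + 1) ⊆ Icc (-((n + 1 : ℕ):ℝ) - 1) (((n + 1 : ℕ):ℝ) + 1) := by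
      apply Icc_subset_Icc <;> push_cast <;> linarith
    have hsubn' : Icc (-((n:ℝ) + 1)) ((n:ℝ) + 1) ⊆ Icc (-(((n+1:ℕ):ℝ) + 1)) (((n+1:ℕ):ℝ) + 1) := by
      apply Icc_subset_Icc <;> push_cast <;> linarith
    have hKmem : ∀ (j : ℕ) (t : ℝ), t ∈ Icc (-((j:ℝ) + 1)) ((j:ℝ) + 1) →
        fs j t ∈ Icc (-(K + 1)) (K + 1) := by
      intro j t ht
      have h3 := hfs3 j t ht
      have h4 := abs_le.1 (hmK t)
      have h5 := abs_le.1 (hMK t)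
      exact ⟨by linarith [h3.1, h4.1], by linarith [h3.2, h5.2]⟩
    refine stmt1_comp F hL ?_ ?_ ?_ ?_ ?_
    · exact fun t ht => (hfs2 (n + 1) t (hsubn' ht)).mono hsubn'
    · exact fun t ht => (hfs2 n t ht)
    · exact fun t ht => hKmem (n + 1) t (hsubn' ht)
    · exact fun t ht => hKmem n t ht
    · have h1 := (hfs3 (n + 1) (-((n:ℝ) + 1)) (hsubn' ⟨le_rfl, by
        have h0 : (0:ℝ) ≤ (n:ℝ) := n.cast_nonneg; linarith⟩)).2
      rw [hfs1 n]
      exact h1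
  -- monotonicity in n
  have hmono : ∀ n j : ℕ, ∀ t : ℝ, |t| ≤ (n:ℝ) + 1 → fs (n + j) t ≤ fs n t := by
    intro n j
    induction j with
    | zero => intro t _; simp
    | succ j ih =>
      intro t ht
      have habs := abs_le.1 ht
      have hcast : (n:ℝ) ≤ ((n + j : ℕ):ℝ) := by push_cast; linarith [Nat.cast_nonneg (α := ℝ) j]
      have h1 : fs (n + j + 1) t ≤ fs (n + j) t := by
        refine hstep (n + j) t ⟨?_, ?_⟩ <;> push_cast <;>
          [linarith [habs.1, Nat.cast_nonneg (α := ℝ) j]; linarith [habs.2, Nat.cast_nonneg (α := ℝ) j]]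
      calc fs (n + (j + 1)) t = fs (n + j + 1) t := by rw [Nat.add_assoc]
        _ ≤ fs (n + j) t := h1
        _ ≤ fs n t := ih t ht
  -- the limit function
  set f : ℝ → ℝ := fun x => ⨅ k : ℕ, fs (⌈|x|⌉₊ + k) x with hfdef
  have hxN : ∀ x : ℝ, |x| ≤ (⌈|x|⌉₊ : ℝ) := fun x => Nat.le_ceil _
  have hmemN : ∀ (x : ℝ) (k : ℕ), ⌈|x|⌉₊ ≤ k → x ∈ Icc (-((k:ℝ) + 1)) ((k:ℝ) + 1) := by
    intro x k hk
    have h1 : (⌈|x|⌉₊ : ℝ) ≤ (k:ℝ) := Nat.cast_le.2 hk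
    have h2 := abs_le.1 ((hxN x).trans h1)
    exact ⟨by linarith [h2.1], by linarith [h2.2]⟩
  have hanti : ∀ x : ℝ, Antitone (fun k : ℕ => fs (⌈|x|⌉₊ + k) x) := by
    intro x i j hij
    obtain ⟨l, rfl⟩ := le_iff_exists_add.1 hij
    simp only
    rw [← Nat.add_assoc]
    refine hmono (⌈|x|⌉₊ + i) l x ?_
    refine le_trans (hxN x) ?_
    have : (⌈|x|⌉₊ : ℝ) ≤ ((⌈|x|⌉₊ + i : ℕ) : ℝ) := Nat.cast_le.2 (Nat.le_add_right _ _)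
    linarith
  have hbdd : ∀ (x : ℝ) (k : ℕ), m x ≤ fs (⌈|x|⌉₊ + k) x ∧ fs (⌈|x|⌉₊ + k) x ≤ M x :=
    fun x k => hfs3 (⌈|x|⌉₊ + k) x (hmemN x (⌈|x|⌉₊ + k) (Nat.le_add_right _ _))
  have hBdd : ∀ x : ℝ, BddBelow (range fun k : ℕ => fs (⌈|x|⌉₊ + k) x) := by
    intro x
    refine ⟨m x, ?_⟩
    rintro _ ⟨k, rfl⟩
    exact (hbdd x k).1
  have hlim0 : ∀ x : ℝ, Tendsto (fun k : ℕ => fs (⌈|x|⌉₊ + k) x) atTop (𝓝 (f x)) :=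
    fun x => tendsto_atTop_ciInf (hanti x) (hBdd x)
  have hlim : ∀ (x : ℝ) (N' : ℕ), ⌈|x|⌉₊ ≤ N' →
      Tendsto (fun k : ℕ => fs (N' + k) x) atTop (𝓝 (f x)) := by
    intro x N' hN'
    obtain ⟨j, rfl⟩ := le_iff_exists_add.1 hN'
    have h1 := (hlim0 x).comp (tendsto_add_atTop_nat j)
    have heq : ((fun k : ℕ => fs (⌈|x|⌉₊ + k) x) ∘ (fun k => k + j)) =
        (fun k : ℕ => fs (⌈|x|⌉₊ + j + k) x) := by
      funext k
      simp only [Function.comp_apply]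
      congr 1
      omega
    rwa [heq] at h1
  have hfm : ∀ x, m x ≤ f x := fun x => le_ciInf (fun k => (hbdd x k).1)
  have hfM : ∀ x, f x ≤ M x := fun x => le_trans (ciInf_le (hBdd x) 0) (hbdd x 0).2
  have hfK : ∀ x, |f x| ≤ K := by
    intro x
    have h4 := abs_le.1 (hmK x)
    have h5 := abs_le.1 (hMK x)
    exact abs_le.2 ⟨by linarith [hfm x, h4.1], by linarith [hfM x, h5.2]⟩
  -- uniform bound for |F| on compact strips
  have hCA : ∀ A : ℝ, ∃ C : ℝ, 0 ≤ C ∧ ∀ t p : ℝ, |t| ≤ A → |p| ≤ K + 1 → |F t p| ≤ C := by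
    intro A
    have hcpt : IsCompact ((Icc (-A) A) ×ˢ (Icc (-(K + 1)) (K + 1)) : Set (ℝ × ℝ)) :=
      isCompact_Icc.prod isCompact_Icc
    obtain ⟨C₀, hC₀⟩ := hcpt.exists_bound_of_continuousOn hFc.continuousOn
    refine ⟨max C₀ 0, le_max_right _ _, fun t p ht hp => ?_⟩
    have := hC₀ (t, p) ⟨abs_le.1 ht |> fun h => ⟨h.1, h.2⟩, abs_le.1 hp |> fun h => ⟨h.1, h.2⟩⟩
    rw [Real.norm_eq_abs] at this
    exact this.trans (le_max_left _ _)
  -- local Lipschitz bound for f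
  have hflip : ∀ A : ℝ, 0 ≤ A → ∃ C : ℝ, 0 ≤ C ∧ ∀ x y : ℝ, |x| ≤ A → |y| ≤ A →
      |f x - f y| ≤ C * |x - y| := by
    intro A hA
    obtain ⟨C, hC0, hC⟩ := hCA A
    refine ⟨C, hC0, fun x y hx hy => ?_⟩
    have hn : ∀ k : ℕ, |fs (⌈A⌉₊ + k) x - fs (⌈A⌉₊ + k) y| ≤ C * |x - y| := by
      intro k
      set n : ℕ := ⌈A⌉₊ + k with hndef
      have hAn : A ≤ (n:ℝ) := le_trans (Nat.le_ceil A) (Nat.cast_le.2 (Nat.le_add_right _ _))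
      have hsubA : Icc (-A) A ⊆ Icc (-((n:ℝ) + 1)) ((n:ℝ) + 1) :=
        Icc_subset_Icc (by linarith) (by linarith)
      have hder : ∀ s ∈ Icc (-A) A, HasDerivWithinAt (fs n) (F s (fs n s)) (Icc (-A) A) s :=
        fun s hs => (hfs2 n s (hsubA hs)).mono hsubA
      have hbound : ∀ s ∈ Icc (-A) A, ‖F s (fs n s)‖ ≤ C := by
        intro s hs
        rw [Real.norm_eq_abs]
        refine hC s (fs n s) (abs_le.2 ⟨hs.1, hs.2⟩) ?_
        have h3 := hfs3 n s (hsubA hs)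
        have h4 := abs_le.1 (hmK s)
        have h5 := abs_le.1 (hMK s)
        exact abs_le.2 ⟨by linarith [h3.1, h4.1], by linarith [h3.2, h5.2]⟩
      have := (convex_Icc (-A) A).norm_image_sub_le_of_norm_hasDerivWithin_le hder hbound
        (abs_le.1 hy |> fun h => ⟨h.1, h.2⟩) (abs_le.1 hx |> fun h => ⟨h.1, h.2⟩)
      rw [Real.norm_eq_abs, Real.norm_eq_abs] at this
      exact this
    have hx' : ⌈|x|⌉₊ ≤ ⌈A⌉₊ := Nat.ceil_le_ceil hx
    have hy' : ⌈|y|⌉₊ ≤ ⌈A⌉₊ := Nat.ceil_le_ceil hy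
    have h2 := ((hlim x ⌈A⌉₊ hx').sub (hlim y ⌈A⌉₊ hy')).abs
    exact le_of_tendsto h2 (Eventually.of_forall hn)
  have hfcont : Continuous f := by
    rw [continuous_iff_continuousAt]
    intro x
    obtain ⟨C, hC0, hC⟩ := hflip (|x| + 1) (by positivity)
    have hlipf : LipschitzOnWith (Real.toNNReal C) f (Icc (-(|x| + 1)) (|x| + 1)) := by
      rw [lipschitzOnWith_iff_dist_le_mul]
      intro p hp q hq
      rw [Real.dist_eq, Real.dist_eq, Real.coe_toNNReal _ hC0]
      exact hC p q (abs_le.2 ⟨hp.1, hp.2⟩) (abs_le.2 ⟨hq.1, hq.2⟩)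
    refine hlipf.continuousOn.continuousAt (Icc_mem_nhds ?_ ?_) <;>
      cases abs_le.1 (le_refl |x|) <;> [linarith [neg_abs_le x]; linarith [le_abs_self x]]
  -- the integral equation
  have hINT : ∀ x : ℝ, f x = f 0 + ∫ t in (0:ℝ)..x, F t (f t) := by
    intro x
    have huIcc : ∀ t ∈ uIcc (0:ℝ) x, |t| ≤ |x| := by
      intro t ht
      rw [uIcc] at ht
      refine abs_le.2 ⟨?_, ?_⟩
      · refine le_trans (le_min ?_ ?_) ht.1 <;> [linarith [abs_nonneg x]; exact neg_abs_le x]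
      · refine le_trans ht.2 (max_le ?_ ?_) <;> [exact abs_nonneg x; exact le_abs_self x]
    have habs2 : ∀ (k : ℕ), ∀ t ∈ uIcc (0:ℝ) x, |t| ≤ ((⌈|x|⌉₊ + k : ℕ) : ℝ) :=
      fun k t ht =>
        le_trans (huIcc t ht) (le_trans (hxN x) (Nat.cast_le.2 (Nat.le_add_right _ _)))
    have hmem2 : ∀ (k : ℕ), ∀ t ∈ uIcc (0:ℝ) x,
        t ∈ Icc (-(((⌈|x|⌉₊ + k : ℕ):ℝ) + 1)) (((⌈|x|⌉₊ + k : ℕ):ℝ) + 1) := by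
      intro k t ht
      have h1 := abs_le.1 (habs2 k t ht)
      exact ⟨by linarith [h1.1], by linarith [h1.2]⟩
    have hder : ∀ k : ℕ, ∀ t ∈ uIcc (0:ℝ) x,
        HasDerivAt (fs (⌈|x|⌉₊ + k)) (F t (fs (⌈|x|⌉₊ + k) t)) t := by
      intro k t ht
      have h1 := abs_le.1 (habs2 k t ht)
      exact (hfs2 (⌈|x|⌉₊ + k) t (hmem2 k t ht)).hasDerivAt
        (Icc_mem_nhds (by linarith [h1.1]) (by linarith [h1.2]))
    have hcont' : ∀ k : ℕ, ContinuousOn (fun t => F t (fs (⌈|x|⌉₊ + k) t)) (uIcc 0 x) := by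
      intro k
      refine hFc.comp_continuousOn (continuousOn_id.prodMk ?_)
      exact fun t ht => ((hder k t ht).continuousAt).continuousWithinAt
    have hFTC : ∀ k : ℕ, ∫ t in (0:ℝ)..x, F t (fs (⌈|x|⌉₊ + k) t) =
        fs (⌈|x|⌉₊ + k) x - fs (⌈|x|⌉₊ + k) 0 :=
      fun k => intervalIntegral.integral_eq_sub_of_hasDerivAt (hder k)
        ((hcont' k).intervalIntegrable)
    obtain ⟨C, hC0, hC⟩ := hCA |x|
    have hDCT : Tendsto (fun k : ℕ => ∫ t in (0:ℝ)..x, F t (fs (⌈|x|⌉₊ + k) t)) atTop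
        (𝓝 (∫ t in (0:ℝ)..x, F t (f t))) := by
      refine intervalIntegral.tendsto_integral_filter_of_dominated_convergence
        (fun _ => C) ?_ ?_ ?_ ?_
      · refine Eventually.of_forall fun k => ?_
        exact ((hcont' k).mono uIoc_subset_uIcc).aestronglyMeasurable measurableSet_uIoc
      · refine Eventually.of_forall fun k => Eventually.of_forall fun t ht => ?_
        rw [Real.norm_eq_abs]
        have htu : t ∈ uIcc (0:ℝ) x := uIoc_subset_uIcc ht
        refine hC t _ (huIcc t htu) ?_
        have h3 := hfs3 (⌈|x|⌉₊ + k) t (hmem2 k t htu)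
        have h4 := abs_le.1 (hmK t)
        have h5 := abs_le.1 (hMK t)
        exact abs_le.2 ⟨by linarith [h3.1, h4.1], by linarith [h3.2, h5.2]⟩
      · exact intervalIntegrable_const
      · refine Eventually.of_forall fun t ht => ?_
        have htu : t ∈ uIcc (0:ℝ) x := uIoc_subset_uIcc ht
        have hNx : ⌈|t|⌉₊ ≤ ⌈|x|⌉₊ := Nat.ceil_le_ceil (huIcc t htu)
        exact ((hFc2 t).tendsto (f t)).comp (hlim t _ hNx)
    have h2 : Tendsto (fun k : ℕ => fs (⌈|x|⌉₊ + k) x - fs (⌈|x|⌉₊ + k) 0) atTop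
        (𝓝 (f x - f 0)) :=
      (hlim x _ le_rfl).sub (hlim 0 _ (by simp))
    have h3 : Tendsto (fun k : ℕ => ∫ t in (0:ℝ)..x, F t (fs (⌈|x|⌉₊ + k) t)) atTop
        (𝓝 (f x - f 0)) := by
      simp only [hFTC]
      exact h2
    have h4 := tendsto_nhds_unique h3 hDCT
    linarith
  -- conclusion
  set f' : ℝ → ℝ := fun x => F x (f x) with hf'def
  have hf'c : Continuous f' := hFc.comp (continuous_id.prodMk hfcont)
  have hderivf : ∀ x, HasDerivAt f (f' x) x := by
    intro x
    have h1 : HasDerivAt (fun u => ∫ t in (0:ℝ)..u, F t (f t)) (f' x) x :=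
      intervalIntegral.integral_hasDerivAt_right (hf'c.intervalIntegrable _ _)
        (hf'c.stronglyMeasurableAtFilter _ _) hf'c.continuousAt
    have h2 : f = fun u => f 0 + ∫ t in (0:ℝ)..u, F t (f t) := funext hINT
    rw [h2]
    simpa using h1.const_add (f 0)
  have hODE : ∀ x, a x * f' x + H (f x) x = 0 := by
    intro x
    have h1 : a x * (-(H (f x) x) / a x) = -(H (f x) x) := by
      field_simp
      rw [mul_div_cancel_left₀ _ (hane x)]
    have h2 : f' x = -(H (f x) x) / a x := by simp only [hf'def, hF, neg_div]
    rw [h2, h1]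
    ring
  have hstrict : ∀ x, m x < f x ∧ f x < M x := by
    intro x
    constructor
    · rcases lt_or_eq_of_le (hfm x) with h | h
      · exact h
      · exfalso
        have hmin : IsLocalMin (fun t => f t - m t) x := by
          refine Eventually.of_forall fun y => ?_
          simp only
          rw [← h]
          linarith [hfm y]
        have hz := hmin.hasDerivAt_eq_zero ((hderivf x).sub (hm x))
        have hgt : m' x < F x (m x) := hFm x
        simp only [hf'def] at hz
        rw [← h] at hz
        linarith [sub_eq_zero.1 hz]
    · rcases lt_or_eq_of_le (hfM x) with h | h
      · exact h
      · exfalso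
        have hmax : IsLocalMax (fun t => f t - M t) x := by
          refine Eventually.of_forall fun y => ?_
          simp only
          rw [h]
          linarith [hfM y]
        have hz := hmax.hasDerivAt_eq_zero ((hderivf x).sub (hM x))
        have hgt : F x (M x) < M' x := hFM x
        simp only [hf'def] at hz
        rw [h] at hz
        linarith [sub_eq_zero.1 hz]
  exact ⟨f, f', hderivf, hf'c, hODE, hstrict⟩
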